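/- In a network graph with tree consistency, fix boundary vertices u, v and a vertex x on P(u,v) at distance δ' from x to v along P(u,v) (i.e., the weight of the portion of P(u,v) after x is δ'). For any boundary vertex z: if |P(u,v) ∩ P(z,v)| ≥ δ' then x lies on P(z,v), at cumulative distance |P(z,v)| − δ' from z along P(z,v). -/

import Mathlib

def WellFormed {V : Type} (E : V → V → Prop) (VB : Set V) (P : V → V → List V) : Prop :=
  ∀ b b', b ∈ VB → b' ∈ VB → b ≠ b' →
    (P b b').head? = some b ∧ (P b b').getLast? = some b' ∧
    (P b b').Nodup ∧ List.Chain' E (P b b') ∧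
    (∀ v ∈ P b b', v ∈ VB → v = b ∨ v = b')

def TreeConsistent {V : Type} (VB : Set V) (P : V → V → List V) : Prop :=
  ∀ b1 b1' b2 b2', b1 ∈ VB → b1' ∈ VB → b2 ∈ VB → b2' ∈ VB → b1 ≠ b1' → b2 ≠ b2' →
    ∃ c : List V, c <:+: P b1 b1' ∧ (c <:+: P b2 b2' ∨ c.reverse <:+: P b2 b2') ∧
      ∀ v, (v ∈ P b1 b1' ∧ v ∈ P b2 b2') ↔ v ∈ c

def pathEdges {V : Type} (p : List V) : List (V × V) := p.zip p.tail

def interLen {V : Type} [DecidableEq V] (W : V × V → ℝ) (p q : List V) : ℝ :=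
  (((pathEdges p).filter (fun e => decide (e ∈ pathEdges q))).map W).sum

def distTo {V : Type} [DecidableEq V] (W : V × V → ℝ) (p : List V) (x : V) : ℝ :=
  ((pathEdges (p.takeWhile (fun v => v ≠ x) ++ [x])).map W).sum

/-- `pathLen` : total length of a path. -/
def pathLen {V : Type} (W : V × V → ℝ) (p : List V) : ℝ :=
  ((pathEdges p).map W).sum

namespace StmtAux

set_option linter.unusedSectionVars false

variable {V : Type} [DecidableEq V]

lemma pathEdges_cons₂ (a b : V) (l : List V) :
    pathEdges (a :: b :: l) = (a, b) :: pathEdges (b :: l) := rfl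

lemma pathEdges_append_cons (a : List V) (x : V) (r : List V) :
    pathEdges (a ++ x :: r) = pathEdges (a ++ [x]) ++ pathEdges (x :: r) := by
  induction a with
  | nil => simp [pathEdges]
  | cons h t ih =>
    cases t with
    | nil => simp [pathEdges_cons₂, pathEdges]
    | cons h2 t2 =>
      simp only [List.cons_append, pathEdges_cons₂] at *
      rw [ih]

lemma pathEdges_eq_zip : ∀ (l : List V), pathEdges l = l.dropLast.zip l.tail
  | [] => rfl
  | [_] => rfl
  | a :: b :: l => by
    rw [pathEdges_cons₂, pathEdges_eq_zip (b :: l)]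
    simp [List.dropLast]

lemma pathEdges_length (l : List V) : (pathEdges l).length = l.length - 1 := by
  rw [pathEdges_eq_zip]
  simp [List.length_zip, List.length_dropLast, List.length_tail]

lemma mem_of_mem_pathEdges {l : List V} {e : V × V} (h : e ∈ pathEdges l) :
    e.1 ∈ l.dropLast ∧ e.2 ∈ l.tail := by
  rw [pathEdges_eq_zip] at h
  obtain ⟨a, b⟩ := e
  exact List.of_mem_zip h

lemma rel_of_mem_pathEdges {E : V → V → Prop} :
    ∀ {l : List V}, List.Chain' E l → ∀ e ∈ pathEdges l, E e.1 e.2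
  | [], _, e, h => by simp [pathEdges] at h
  | [_], _, e, h => by simp [pathEdges] at h
  | _ :: _ :: _, hc, e, h => by
    rw [pathEdges_cons₂] at h
    rcases List.mem_cons.1 h with rfl | h
    · exact (List.isChain_cons_cons.1 hc).1
    · exact rel_of_mem_pathEdges (List.isChain_cons_cons.1 hc).2 e h

lemma mem_of_getLast?_eq {l : List V} {v : V} (h : l.getLast? = some v) : v ∈ l := by
  cases l with
  | nil => simp at h
  | cons a t =>
    have h2 := List.getLast?_eq_getLast (l := a :: t) (by simp)
    rw [h2, Option.some_inj] at h
    exact h ▸ List.getLast_mem (by simp)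

lemma dropWhile_ne_eq_cons {l : List V} {x : V} (h : x ∈ l) :
    ∃ r, l.dropWhile (fun v => v ≠ x) = x :: r := by
  induction l with
  | nil => simp at h
  | cons a t ih =>
    by_cases hax : a = x
    · subst hax; exact ⟨t, by simp [List.dropWhile_cons]⟩
    · rcases List.mem_cons.1 h with rfl | h
      · exact absurd rfl hax
      · simpa [List.dropWhile_cons, hax] using ih h

lemma dropWhile_ne_append {s r : List V} {x : V} (hs : x ∉ s) :
    ((s ++ x :: r).dropWhile (fun v => v ≠ x)) = x :: r := by
  induction s with
  | nil => simp [List.dropWhile_cons]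
  | cons a t ih =>
    have hax : a ≠ x := fun h => hs (h ▸ List.mem_cons_self (a := a) (l := t))
    have := ih (fun h => hs (List.mem_cons_of_mem a h))
    simpa [List.dropWhile_cons, hax] using this

lemma pathLen_append_cons (W : V × V → ℝ) (a : List V) (x : V) (r : List V) :
    pathLen W (a ++ x :: r) = pathLen W (a ++ [x]) + pathLen W (x :: r) := by
  unfold pathLen
  rw [pathEdges_append_cons]
  simp

lemma distTo_eq_sub (W : V × V → ℝ) {p : List V} {x : V} (h : x ∈ p) :
    distTo W p x = pathLen W p - pathLen W (p.dropWhile (fun v => v ≠ x)) := by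
  obtain ⟨r, hr⟩ := dropWhile_ne_eq_cons h
  have hsplit := List.takeWhile_append_dropWhile (p := fun v => decide (v ≠ x)) (l := p)
  rw [hr] at hsplit
  unfold distTo pathLen
  rw [hr]
  conv_rhs => rw [← hsplit, pathEdges_append_cons]
  simp

lemma suffix_of_infix_getLast {l c : List V} {v : V} (hnd : l.Nodup)
    (hinf : c <:+: l) (hlast : l.getLast? = some v) (hvc : v ∈ c) : c <:+ l := by
  obtain ⟨s, t, hst⟩ := hinf
  cases t with
  | nil => exact ⟨s, by simpa using hst⟩
  | cons a t' =>
    exfalso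
    have hvt : v ∈ a :: t' := by
      apply mem_of_getLast?_eq
      rw [← hlast, ← hst, List.append_assoc,
        List.getLast?_append_of_ne_nil _ (by simp : (c ++ a :: t') ≠ []),
        List.getLast?_append_of_ne_nil _ (by simp : (a :: t') ≠ [])]
    have hnd2 : (c ++ a :: t').Nodup := by
      rw [← hst, List.append_assoc] at hnd
      exact (List.sublist_append_right _ _).nodup hnd
    exact List.disjoint_of_nodup_append hnd2 hvc hvt

lemma eq_singleton_of_nodup {c : List V} {v : V} (hnd : c.Nodup)
    (hh : c.head? = some v) (hl : c.getLast? = some v) : c = [v] := by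
  cases c with
  | nil => simp at hh
  | cons a t =>
    cases t with
    | nil => simp_all
    | cons b t' =>
      exfalso
      have ha : a = v := by simpa using hh
      have hvm : v ∈ b :: t' := by
        apply mem_of_getLast?_eq
        rw [← hl, List.getLast?_cons_cons]
      exact (List.nodup_cons.1 hnd).1 (ha ▸ hvm)

end StmtAux

open StmtAux in
/-- In a tree-consistent network graph with positive edge weights, if `x` lies
on `P(u,v)` with the portion of `P(u,v)` after `x` of weight `δ'`, and
`|P(u,v) ∩ P(z,v)| ≥ δ'`, then `x` lies on `P(z,v)`, at cumulative distance
`|P(z,v)| − δ'` from `z`. -/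
theorem stmt_16 {V : Type} [DecidableEq V]
    (E : V → V → Prop) (W : V × V → ℝ) (VB : Set V) (P : V → V → List V)
    (hwf : WellFormed E VB P) (htc : TreeConsistent VB P)
    (hWpos : ∀ u v : V, E u v → 0 < W (u, v))
    (u v z : V) (hu : u ∈ VB) (hv : v ∈ VB) (hz : z ∈ VB)
    (huv : u ≠ v) (hzv : z ≠ v)
    (x : V) (hx : x ∈ P u v)
    (hge : interLen W (P u v) (P z v) ≥ pathLen W (P u v) - distTo W (P u v) x) :
    x ∈ P z v ∧
      distTo W (P z v) x =
        pathLen W (P z v) - (pathLen W (P u v) - distTo W (P u v) x) := by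
  obtain ⟨hpu, hpv, hpnd, hpch, -⟩ := hwf u v hu hv huv
  obtain ⟨hqz, hqv, hqnd, hqch, -⟩ := hwf z v hz hv hzv
  obtain ⟨c, hcp, hcq, hc⟩ := htc u v z v hu hv hz hv huv hzv
  set p := P u v with hpdef
  set q := P z v with hqdef
  have hWp : ∀ e ∈ pathEdges p, 0 < W e := fun e he => by
    have := rel_of_mem_pathEdges hpch e he
    simpa using hWpos e.1 e.2 this
  have hvp : v ∈ p := mem_of_getLast?_eq hpv
  have hvq : v ∈ q := mem_of_getLast?_eq hqv
  have hvc : v ∈ c := (hc v).1 ⟨hvp, hvq⟩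
  have hcne : c ≠ [] := fun h => by simp [h] at hvc
  have hcsp : c <:+ p := suffix_of_infix_getLast hpnd hcp hpv hvc
  have hcsq : c <:+ q := by
    rcases hcq with h | h
    · exact suffix_of_infix_getLast hqnd h hqv hvc
    · have hrs : c.reverse <:+ q :=
        suffix_of_infix_getLast hqnd h hqv (by simpa using hvc)
      have hlast_c : c.getLast? = some v := by
        obtain ⟨s, hs⟩ := hcsp
        rw [← hpv, ← hs, List.getLast?_append_of_ne_nil _ hcne]
      have hhead_c : c.head? = some v := by
        rw [← List.getLast?_reverse]
        obtain ⟨s, hs⟩ := hrs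
        rw [← hqv, ← hs, List.getLast?_append_of_ne_nil _ (by simpa using hcne)]
      have hcv : c = [v] := eq_singleton_of_nodup (hcp.sublist.nodup hpnd) hhead_c hlast_c
      rw [hcv]
      rw [hcv] at hrs
      simpa using hrs
  obtain ⟨hc0, tc, rfl⟩ : ∃ h t, c = h :: t := by
    cases c with
    | nil => exact absurd rfl hcne
    | cons a t => exact ⟨a, t, rfl⟩
  have hcsp' := hcsp
  have hcsq' := hcsq
  obtain ⟨s, hs⟩ := hcsp'
  obtain ⟨s', hs'⟩ := hcsq'
  -- interLen = pathLen of the common suffix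
  have hIL : interLen W p q = pathLen W (hc0 :: tc) := by
    unfold interLen pathLen
    conv_lhs => rw [← hs, pathEdges_append_cons]
    rw [List.filter_append]
    have h1 : (pathEdges (s ++ [hc0])).filter (fun e => decide (e ∈ pathEdges q)) = [] := by
      rw [List.filter_eq_nil_iff]
      intro e he hmem
      simp only [decide_eq_true_eq] at hmem
      have he1s : e.1 ∈ s := by
        have := (mem_of_mem_pathEdges he).1
        rwa [List.dropLast_concat] at this
      have he1q : e.1 ∈ q := (List.dropLast_sublist q).subset (mem_of_mem_pathEdges hmem).1
      have he1p : e.1 ∈ p := by rw [← hs]; exact List.mem_append_left _ he1s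
      have he1c : e.1 ∈ hc0 :: tc := (hc e.1).1 ⟨he1p, he1q⟩
      have hdisj : s.Disjoint (hc0 :: tc) := by
        rw [← hs] at hpnd
        exact List.disjoint_of_nodup_append hpnd
      exact hdisj he1s he1c
    have h2 : (pathEdges (hc0 :: tc)).filter (fun e => decide (e ∈ pathEdges q)) =
        pathEdges (hc0 :: tc) := by
      rw [List.filter_eq_self]
      intro e he
      simp only [decide_eq_true_eq]
      rw [← hs', pathEdges_append_cons]
      exact List.mem_append_right _ he
    rw [h1, h2]
    simp
  -- the suffix of p starting at x
  obtain ⟨r, hr⟩ := dropWhile_ne_eq_cons hx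
  have hdsuf : (x :: r) <:+ p :=
    ⟨_, by rw [← hr]; exact List.takeWhile_append_dropWhile (l := p)⟩
  have hdist_p : distTo W p x = pathLen W p - pathLen W (x :: r) := by
    rw [distTo_eq_sub W hx, hr]
  have hge' : pathLen W (hc0 :: tc) ≥ pathLen W (x :: r) := by
    rw [← hIL]; linarith
  have hsub1 : ∀ ed ∈ pathEdges (x :: r), ed ∈ pathEdges p := by
    obtain ⟨t, ht⟩ := hdsuf
    intro ed hed
    rw [← ht, pathEdges_append_cons]
    exact List.mem_append_right _ hed
  have hdc : (x :: r) <:+ (hc0 :: tc) := by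
    rcases List.suffix_or_suffix_of_suffix hdsuf hcsp with h | h
    · exact h
    · obtain ⟨e, he⟩ := h
      cases e with
      | nil =>
        rw [List.nil_append] at he
        exact he ▸ List.suffix_rfl
      | cons e0 e' =>
        exfalso
        have hlen : pathLen W (x :: r) =
            pathLen W ((e0 :: e') ++ [hc0]) + pathLen W (hc0 :: tc) := by
          rw [← he]; exact pathLen_append_cons W _ _ _
        have hpos : 0 < pathLen W ((e0 :: e') ++ [hc0]) := by
          apply List.sum_pos
          · intro y hy
            simp only [List.mem_map] at hy
            obtain ⟨ed, hed, rfl⟩ := hy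
            apply hWp
            apply hsub1
            rw [← he, pathEdges_append_cons]
            exact List.mem_append_left _ hed
          · intro hcon
            have := congrArg List.length hcon
            simp [pathEdges_length] at this
        linarith
  have hdq : (x :: r) <:+ q := hdc.trans hcsq
  have hxq : x ∈ q := hdq.mem (List.mem_cons_self (a := x) (l := r))
  refine ⟨hxq, ?_⟩
  obtain ⟨s'', hs''⟩ := hdq
  have hxns : x ∉ s'' := by
    rw [← hs''] at hqnd
    exact fun hxs => List.disjoint_of_nodup_append hqnd hxs (List.mem_cons_self (a := x) (l := r))
  have hdist_q : distTo W q x = pathLen W q - pathLen W (x :: r) := by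
    rw [distTo_eq_sub W hxq]
    congr 1
    rw [← hs'', dropWhile_ne_append hxns]
  rw [hdist_q]
  linarith
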